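/- Demographic Influence generalizes Node-Kayles: let G₀ = (V₀, E₀) be a finite simple graph. Define the Demographic Influence position Z = (G, Θ, D) where the vertex set is V₀ together with a new vertex t_v for each v ∈ V₀; Θ(v) = 0 for all v ∈ V₀ and Θ(t_v) = 1 for all v ∈ V₀; the adjacencies of G are: each v ∈ V₀ is adjacent to t_v, to every w ∈ V₀ with (v, w) ∈ E₀, and to t_w for every neighbor w of v in G₀ (and there are no other edges); and D = { D_v : v ∈ V₀ } with D_v = { v, t_v }. Then Node-Kayles on G₀ is isomorphic (as a game tree, via the move correspondence v ↔ (D_v, 1)) to the Demographic Influence game on Z. -/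

import Mathlib

open scoped Classical

noncomputable section

namespace TW

variable {ι κ : Type*}

/-- A column `j` of a Crosswise AND position is feasible if it contains a `true` (green) entry. -/
def Feasible (B : ι → κ → Bool) (j : κ) : Prop := ∃ i, B i j = true

/-- The Crosswise AND move at column `j`: if `B i j = false` then row `i` becomes all false;
otherwise row `i` is unchanged except that entry `(i, j)` becomes false. -/
def move (B : ι → κ → Bool) (j : κ) : ι → κ → Bool :=
  fun i j' => if B i j = false then false else if j' = j then false else B i j'

/-- A Demographic Influence move `(Dk, q)` is feasible if `q ≥ 1` and some member of the
demographic `Dk` has threshold at least `q`. -/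
def diFeasible {V : Type*} (Θ : V → ℤ) (Dk : Finset V) (q : ℕ) : Prop :=
  1 ≤ q ∧ ∃ v ∈ Dk, (q : ℤ) ≤ Θ v

/-- The Demographic Influence move `(Dk, q)`: first every member of `Dk` has its value
reduced by `q`; then every member of `Dk` whose value was `≥ 0` before the move and is
`< 0` after the subtraction sets the value of each of its neighbours in `G` to `-1`. -/
def diMove {V : Type*} (G : SimpleGraph V) (Dk : Finset V) (Θ : V → ℤ) (q : ℕ) :
    V → ℤ :=
  fun v =>
    if ∃ u ∈ Dk, 0 ≤ Θ u ∧ Θ u - q < 0 ∧ G.Adj u v then -1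
    else if v ∈ Dk then Θ v - q else Θ v

/-- The graph of the reduction from Node-Kayles on `G₀` to Demographic Influence: the
vertices of `G₀` (as `Sum.inl`) together with a new vertex `t_v = Sum.inr v` for each
`v ∈ V₀`; each `v` is adjacent to `t_v`, to each of its `G₀`-neighbours `w`, and to `t_w`
for each of its `G₀`-neighbours `w`; there are no other edges. -/
def NKDIgraph {V₀ : Type*} (G₀ : SimpleGraph V₀) : SimpleGraph (V₀ ⊕ V₀) where
  Adj a b := match a, b with
    | .inl u, .inl v => G₀.Adj u v
    | .inl u, .inr v => u = v ∨ G₀.Adj u v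
    | .inr v, .inl u => u = v ∨ G₀.Adj u v
    | .inr _, .inr _ => False
  symm := by
    constructor
    rintro (u | u) (v | v) h
    · exact G₀.adj_symm h
    · exact h
    · exact h
    · exact h.elim
  loopless := by
    constructor
    rintro (u | u) h
    · exact G₀.irrefl h
    · exact h.elim

/-- `NKDIEq G₀ G D A Θ` says that the Node-Kayles game on `G₀` with available vertex set
`A` and the Demographic Influence game on `(G, Θ, D)` have isomorphic game trees via the
move correspondence `v ↔ (D v, 1)`: the feasible Demographic Influence moves are exactly
the pairs `(D v, 1)` with `v ∈ A`, and the move operations commute, recursively. -/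
def NKDIEq {V₀ : Type*} [Fintype V₀] [DecidableEq V₀] (G₀ : SimpleGraph V₀)
    (G : SimpleGraph (V₀ ⊕ V₀)) (D : V₀ → Finset (V₀ ⊕ V₀))
    (A : Finset V₀) (Θ : (V₀ ⊕ V₀) → ℤ) : Prop :=
  (∀ (v : V₀) (q : ℕ), diFeasible Θ (D v) q ↔ (q = 1 ∧ v ∈ A)) ∧
  ∀ v, ∀ _ : v ∈ A,
    NKDIEq G₀ G D (A \ insert v (Finset.univ.filter (G₀.Adj v))) (diMove G (D v) Θ 1)
termination_by A.card
decreasing_by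
  rename_i h
  exact Finset.card_lt_card
    ((Finset.ssubset_iff_of_subset Finset.sdiff_subset).mpr ⟨v, h, by simp⟩)


theorem NKDIEq_key {V₀ : Type*} [Fintype V₀] [DecidableEq V₀] (G₀ : SimpleGraph V₀)
    (A : Finset V₀) :
    NKDIEq G₀ (NKDIgraph G₀) (fun v => {Sum.inl v, Sum.inr v}) A
      (Sum.elim (fun v => if v ∈ A then (0 : ℤ) else -1)
        (fun v => if v ∈ A then (1 : ℤ) else -1)) := by
  induction A using Finset.strongInduction with
  | _ A ih =>
    rw [NKDIEq]
    refine ⟨?_, ?_⟩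
    · intro v q
      constructor
      · rintro ⟨hq, u, hu, hΘ⟩
        simp only [Finset.mem_insert, Finset.mem_singleton] at hu
        rcases hu with rfl | rfl
        · simp only [Sum.elim_inl] at hΘ
          by_cases hvA : v ∈ A <;> simp [hvA] at hΘ <;> omega
        · simp only [Sum.elim_inr] at hΘ
          by_cases hvA : v ∈ A
          · simp [hvA] at hΘ; exact ⟨by omega, hvA⟩
          · simp [hvA] at hΘ; omega
      · rintro ⟨rfl, hvA⟩
        exact ⟨le_refl 1, Sum.inr v, by simp, by simp [hvA]⟩
    · intro v hv
      have hmove : diMove (NKDIgraph G₀) {Sum.inl v, Sum.inr v}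
          (Sum.elim (fun w => if w ∈ A then (0 : ℤ) else -1)
            (fun w => if w ∈ A then (1 : ℤ) else -1)) 1 =
          (Sum.elim
            (fun w => if w ∈ A \ insert v (Finset.univ.filter (G₀.Adj v)) then (0 : ℤ) else -1)
            (fun w => if w ∈ A \ insert v (Finset.univ.filter (G₀.Adj v)) then (1 : ℤ) else -1)) := by
        have hcond : ∀ x : V₀ ⊕ V₀,
            (∃ u ∈ ({Sum.inl v, Sum.inr v} : Finset (V₀ ⊕ V₀)),
              0 ≤ (Sum.elim (fun w => if w ∈ A then (0 : ℤ) else -1)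
                (fun w => if w ∈ A then (1 : ℤ) else -1)) u ∧
              (Sum.elim (fun w => if w ∈ A then (0 : ℤ) else -1)
                (fun w => if w ∈ A then (1 : ℤ) else -1)) u - (1 : ℕ) < 0 ∧
              (NKDIgraph G₀).Adj u x) ↔ (NKDIgraph G₀).Adj (Sum.inl v) x := by
          intro x
          constructor
          · rintro ⟨u, hu, h0, h1, hadj⟩
            simp only [Finset.mem_insert, Finset.mem_singleton] at hu
            rcases hu with rfl | rfl
            · exact hadj
            · simp only [Sum.elim_inr, hv, if_pos] at h0 h1; omega
          · intro hadj
            exact ⟨Sum.inl v, by simp, by simp [hv], by simp [hv], hadj⟩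
        funext x
        rw [diMove]
        rcases x with w | w
        · by_cases hadj : (NKDIgraph G₀).Adj (Sum.inl v) (Sum.inl w)
          · rw [if_pos ((hcond _).mpr hadj)]
            have : G₀.Adj v w := hadj
            simp [Finset.mem_sdiff, this]
          · rw [if_neg (fun h => hadj ((hcond _).mp h))]
            have hvw : ¬ G₀.Adj v w := hadj
            by_cases hwv : w = v
            · subst hwv
              simp [hv, Finset.mem_sdiff]
            · have : (Sum.inl w : V₀ ⊕ V₀) ∉ ({Sum.inl v, Sum.inr v} : Finset (V₀ ⊕ V₀)) := by
                simp [hwv]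
              rw [if_neg this]
              simp only [Sum.elim_inl, Finset.mem_sdiff, Finset.mem_insert,
                Finset.mem_filter, Finset.mem_univ, true_and]
              by_cases hwA : w ∈ A <;> simp [hwA, hwv, hvw]
        · by_cases hadj : (NKDIgraph G₀).Adj (Sum.inl v) (Sum.inr w)
          · rw [if_pos ((hcond _).mpr hadj)]
            have : v = w ∨ G₀.Adj v w := hadj
            simp only [Sum.elim_inr, Finset.mem_sdiff, Finset.mem_insert,
              Finset.mem_filter, Finset.mem_univ, true_and]
            rcases this with rfl | h
            · simp
            · simp [h]
          · rw [if_neg (fun h => hadj ((hcond _).mp h))]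
            have h' : ¬ (v = w ∨ G₀.Adj v w) := hadj
            push_neg at h'
            have : (Sum.inr w : V₀ ⊕ V₀) ∉ ({Sum.inl v, Sum.inr v} : Finset (V₀ ⊕ V₀)) := by
              simp [(h'.1).symm]
            rw [if_neg this]
            simp only [Sum.elim_inr, Finset.mem_sdiff, Finset.mem_insert,
              Finset.mem_filter, Finset.mem_univ, true_and]
            by_cases hwA : w ∈ A <;> simp [hwA, Ne.symm h'.1, h'.2]
      rw [hmove]
      exact ih _ ((Finset.ssubset_iff_of_subset Finset.sdiff_subset).mpr ⟨v, hv, by simp⟩)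

/-- Demographic Influence generalizes Node-Kayles.  For a finite simple
graph `G₀`, Node-Kayles on `G₀` (all vertices initially available) is isomorphic, via the
move correspondence `v ↔ (D_v, 1)`, to the Demographic Influence game on `Z = (G, Θ, D)`
where `G = NKDIgraph G₀`, `Θ v = 0` and `Θ (t_v) = 1` for `v ∈ V₀`, and
`D_v = {v, t_v}`. -/
theorem stmt14 {V₀ : Type*} [Fintype V₀] [DecidableEq V₀] (G₀ : SimpleGraph V₀) :
    NKDIEq G₀ (NKDIgraph G₀) (fun v => {Sum.inl v, Sum.inr v}) Finset.univ
      (Sum.elim (fun _ => (0 : ℤ)) (fun _ => (1 : ℤ))) := by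
  have := NKDIEq_key G₀ Finset.univ
  simpa using this

end TW
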